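/- A modal contribution equals the sum of its contributions to all states: if A is Hurwitz, then for each i, Vᴴ P̄_{z i} V = ∑_{k=1}^n P̃_{x_k i}, where P̄_{z i} := −{ ∑_{j=1}^n ((u_iᴴ u_j)/(conj(λ_i) + λ_j)) e_i e_jᵀ }_H and P̃_{x_k i} := −{ conj(v_i) · conj(u_i^k) · e_kᵀ (conj(λ_i)I + A)⁻¹ }_H, with conj(v_i) the column vector whose entries are the complex conjugates of the entries of v_i and u_i^k the k-th component of u_i. -/

import Mathlib

open Matrix BigOperators

/-- The Hermitian part `{M}_H = ½(M + Mᴴ)` of a square complex matrix. -/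
noncomputable def hermPart {n : ℕ} (M : Matrix (Fin n) (Fin n) ℂ) :
    Matrix (Fin n) (Fin n) ℂ :=
  (1 / 2 : ℂ) • (M + Mᴴ)

/-- The modal-contribution matrix
`P̄_{z i} := −{ ∑_j ((u_iᴴ u_j)/(conj(λ_i) + λ_j)) e_i e_jᵀ }_H`. -/
noncomputable def modalContrib {n : ℕ} (U : Matrix (Fin n) (Fin n) ℂ) (lam : Fin n → ℂ)
    (i : Fin n) : Matrix (Fin n) (Fin n) ℂ :=
  -hermPart (∑ j, Matrix.single i j
    ((∑ k, starRingEnd ℂ (U k i) * U k j) / (starRingEnd ℂ (lam i) + lam j)))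

/-- The sub-Gramian of the `k`-th state associated with the `i`-th mode,
`P̃_{x_k i} := −{ conj(v_i) conj(u_i^k) e_kᵀ (conj(λ_i)I + A)⁻¹ }_H`. -/
noncomputable def stateSubGramian {n : ℕ} (A U V : Matrix (Fin n) (Fin n) ℂ)
    (lam : Fin n → ℂ) (k i : Fin n) : Matrix (Fin n) (Fin n) ℂ :=
  -hermPart
    (Matrix.vecMulVec (fun a => starRingEnd ℂ (V i a))
        (fun b => starRingEnd ℂ (U k i) * (if b = k then 1 else 0)) *
      (starRingEnd ℂ (lam i) • (1 : Matrix (Fin n) (Fin n) ℂ) + A)⁻¹)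

lemma hermPart_conj {n : ℕ} (M V : Matrix (Fin n) (Fin n) ℂ) :
    Vᴴ * hermPart M * V = hermPart (Vᴴ * M * V) := by
  simp [hermPart, Matrix.mul_add, Matrix.add_mul, Matrix.mul_smul, Matrix.smul_mul,
    Matrix.conjTranspose_mul, Matrix.mul_assoc]

lemma hermPart_sum {n : ℕ} (N : Fin n → Matrix (Fin n) (Fin n) ℂ) :
    ∑ k, hermPart (N k) = hermPart (∑ k, N k) := by
  simp [hermPart, Matrix.conjTranspose_sum, Finset.smul_sum, ← Finset.sum_add_distrib]

lemma shifted_inv_eq {n : ℕ} (A U V : Matrix (Fin n) (Fin n) ℂ) (lam : Fin n → ℂ)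
    (hUV : U * V = 1) (hVU : V * U = 1)
    (hA : A = U * Matrix.diagonal lam * V)
    (i : Fin n) (hd : ∀ j, starRingEnd ℂ (lam i) + lam j ≠ 0) :
    (starRingEnd ℂ (lam i) • (1 : Matrix (Fin n) (Fin n) ℂ) + A)⁻¹
      = U * Matrix.diagonal (fun j => (starRingEnd ℂ (lam i) + lam j)⁻¹) * V := by
  have hone : (starRingEnd ℂ (lam i)) • (1 : Matrix (Fin n) (Fin n) ℂ)
      = Matrix.diagonal (fun _ => starRingEnd ℂ (lam i)) := by
    ext a b; by_cases h : a = b <;> simp [Matrix.diagonal_apply, h, Matrix.one_apply]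
  have hB : starRingEnd ℂ (lam i) • (1 : Matrix (Fin n) (Fin n) ℂ) + A
      = U * Matrix.diagonal (fun j => starRingEnd ℂ (lam i) + lam j) * V := by
    have hdiag : Matrix.diagonal (fun j => starRingEnd ℂ (lam i) + lam j)
        = Matrix.diagonal (fun _ => starRingEnd ℂ (lam i)) + Matrix.diagonal lam := by
      rw [← Matrix.diagonal_add]
    rw [hdiag, Matrix.mul_add, Matrix.add_mul, ← hA, ← hone]
    congr 1
    rw [Matrix.mul_smul, Matrix.smul_mul, Matrix.mul_one, hUV]
  rw [hB]
  apply Matrix.inv_eq_left_inv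
  calc (U * Matrix.diagonal (fun j => (starRingEnd ℂ (lam i) + lam j)⁻¹) * V) *
        (U * Matrix.diagonal (fun j => starRingEnd ℂ (lam i) + lam j) * V)
      = U * (Matrix.diagonal (fun j => (starRingEnd ℂ (lam i) + lam j)⁻¹) * ((V * U) *
          (Matrix.diagonal (fun j => starRingEnd ℂ (lam i) + lam j) * V))) := by
        simp only [Matrix.mul_assoc]
    _ = 1 := by
        rw [hVU, Matrix.one_mul]
        simp only [← Matrix.mul_assoc, Matrix.diagonal_mul_diagonal]
        have : (fun j => (starRingEnd ℂ (lam i) + lam j)⁻¹ * (starRingEnd ℂ (lam i) + lam j))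
            = fun _ => (1 : ℂ) := by
          funext j; exact inv_mul_cancel₀ (hd j)
        rw [this, Matrix.diagonal_one, Matrix.mul_one, hUV]

lemma core_identity {n : ℕ} (U V : Matrix (Fin n) (Fin n) ℂ) (lam : Fin n → ℂ)
    (i : Fin n) :
    Vᴴ * (∑ j, Matrix.single i j
      ((∑ k, starRingEnd ℂ (U k i) * U k j) / (starRingEnd ℂ (lam i) + lam j))) * V
    = ∑ k, Matrix.vecMulVec (fun a => starRingEnd ℂ (V i a))
        (fun b => starRingEnd ℂ (U k i) * (if b = k then 1 else 0)) *
        (U * Matrix.diagonal (fun j => (starRingEnd ℂ (lam i) + lam j)⁻¹) * V) := by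
  ext a b
  simp only [Matrix.mul_apply, Matrix.sum_apply, Matrix.single, Matrix.of_apply,
    Matrix.conjTranspose_apply, Matrix.vecMulVec_apply, Matrix.diagonal_apply,
    Finset.sum_apply]
  simp only [ite_and, mul_ite, mul_one, mul_zero, ite_mul, zero_mul, Finset.sum_ite_eq,
    Finset.sum_ite_eq', Finset.mem_univ, if_true, Finset.sum_ite_irrel, Finset.sum_const_zero]
  simp only [Finset.mul_sum]
  rw [Finset.sum_comm]
  refine Finset.sum_congr rfl fun j _ => ?_
  simp only [div_eq_mul_inv, Finset.sum_mul, Finset.mul_sum, starRingEnd_apply]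
  refine Finset.sum_congr rfl fun k _ => ?_
  ring

/-- A modal contribution equals the sum of its contributions to all states: if `A` is
Hurwitz, then for each `i`, `Vᴴ P̄_{z i} V = ∑_k P̃_{x_k i}`. -/
theorem modal_contribution_eq_sum_of_state_contributions
    (n : ℕ) (hn : 1 ≤ n)
    (A U V : Matrix (Fin n) (Fin n) ℂ) (lam : Fin n → ℂ)
    (hUV : U * V = 1) (hVU : V * U = 1)
    (hA : A = U * Matrix.diagonal lam * V)
    (hHur : ∀ i, (lam i).re < 0)
    (i : Fin n) :
    Vᴴ * modalContrib U lam i * V = ∑ k, stateSubGramian A U V lam k i := by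
  have hd : ∀ j, starRingEnd ℂ (lam i) + lam j ≠ 0 := by
    intro j h
    have h1 := hHur i; have h2 := hHur j
    have hre : (starRingEnd ℂ (lam i) + lam j).re = (lam i).re + (lam j).re := by simp
    rw [h] at hre; simp at hre; linarith
  have hinv := shifted_inv_eq A U V lam hUV hVU hA i hd
  simp only [modalContrib, stateSubGramian, Matrix.mul_neg, Matrix.neg_mul, hinv]
  rw [hermPart_conj, Finset.sum_neg_distrib, hermPart_sum, core_identity U V lam i]
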